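/- If f : H → (-∞,+∞] is proper, lower semicontinuous, and convex on a real Hilbert space H, and x ∈ dom ∂f, then for every t > 0 and every u ∈ ∂f(x), the point (x + t·u, f(x) − t) does not belong to the epigraph of f, and its metric projection onto epi f equals (x, f(x)). -/

import Mathlib

open scoped Classical
open Filter Set Topology

noncomputable section

/-- `f` is proper, convex and lower semicontinuous (the class `Γ₀`). -/
def Gamma0 {E : Type*} [NormedAddCommGroup E] [NormedSpace ℝ E] (f : E → EReal) : Prop :=
  (∃ x, f x ≠ ⊤) ∧ (∀ x, f x ≠ ⊥) ∧
  (∀ x y : E, ∀ a b : ℝ, 0 ≤ a → 0 ≤ b → a + b = 1 →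
    f (a • x + b • y) ≤ (a : EReal) * f x + (b : EReal) * f y) ∧
  LowerSemicontinuous f

/-- recession function of `f` with base point `x0 ∈ dom f`:
`(rec f)(x) = lim_{t→∞} (f(x0+tx)-f(x0))/t`, which by convexity equals the supremum. -/
def recFn {E : Type*} [NormedAddCommGroup E] [NormedSpace ℝ E]
    (f : E → EReal) (x0 : E) (x : E) : EReal :=
  ⨆ t ∈ Set.Ioi (0 : ℝ), (f (x0 + t • x) - f x0) * ((t⁻¹ : ℝ) : EReal)

/-- the perspective function of `f` (recession with base point `x0 ∈ dom f`). -/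
def persp {E : Type*} [NormedAddCommGroup E] [NormedSpace ℝ E]
    (f : E → EReal) (x0 : E) (p : E × ℝ) : EReal :=
  if 0 < p.2 then (p.2 : EReal) * f (p.2⁻¹ • p.1)
  else if p.2 = 0 then recFn f x0 p.1 else ⊤

/-- Fenchel conjugate. -/
def conj {E : Type*} [NormedAddCommGroup E] [InnerProductSpace ℝ E]
    (f : E → EReal) (u : E) : EReal :=
  ⨆ x, ((inner ℝ x u : ℝ) : EReal) - f x

/-- Fenchel conjugate on `ℝ`. -/
def conjR (f : ℝ → EReal) (u : ℝ) : EReal := ⨆ x : ℝ, ((x * u : ℝ) : EReal) - f x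

/-- Fenchel conjugate on `E × ℝ` (with the Hilbert direct sum inner product). -/
def conj2 {E : Type*} [NormedAddCommGroup E] [InnerProductSpace ℝ E]
    (g : E × ℝ → EReal) (q : E × ℝ) : EReal :=
  ⨆ p : E × ℝ, (((inner ℝ p.1 q.1 : ℝ) + p.2 * q.2 : ℝ) : EReal) - g p

/-- indicator function of a set. -/
def indE {E : Type*} (C : Set E) (x : E) : EReal := if x ∈ C then 0 else ⊤

/-- support function of a set. -/
def suppFn {E : Type*} [NormedAddCommGroup E] [InnerProductSpace ℝ E]
    (C : Set E) (x : E) : EReal := ⨆ u ∈ C, ((inner ℝ u x : ℝ) : EReal)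

/-- epigraph of an extended-real-valued function. -/
def epi {E : Type*} (f : E → EReal) : Set (E × ℝ) := {p | f p.1 ≤ (p.2 : EReal)}

/-- epigraph of the perspective of `f`, as a subset of `E × ℝ × ℝ`. -/
def epiPersp {E : Type*} [NormedAddCommGroup E] [NormedSpace ℝ E]
    (f : E → EReal) (x0 : E) : Set (E × ℝ × ℝ) :=
  {p | persp f x0 (p.1, p.2.1) ≤ (p.2.2 : EReal)}

/-- `p` is the metric projection of `z` onto `C ⊆ E`. -/
def IsProjE {E : Type*} [NormedAddCommGroup E] (C : Set E) (z p : E) : Prop :=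
  p ∈ C ∧ ∀ q ∈ C, ‖z - p‖ ≤ ‖z - q‖

/-- `p` is the metric projection of `z` onto `C ⊆ E ⊕ ℝ` (Hilbert direct sum distance). -/
def IsProj2 {E : Type*} [NormedAddCommGroup E] (C : Set (E × ℝ)) (z p : E × ℝ) : Prop :=
  p ∈ C ∧ ∀ q ∈ C,
    ‖z.1 - p.1‖ ^ 2 + (z.2 - p.2) ^ 2 ≤ ‖z.1 - q.1‖ ^ 2 + (z.2 - q.2) ^ 2

/-- `p` is the metric projection of `z` onto `C ⊆ E ⊕ ℝ ⊕ ℝ` (Hilbert direct sum distance). -/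
def IsProj3 {E : Type*} [NormedAddCommGroup E] (C : Set (E × ℝ × ℝ)) (z p : E × ℝ × ℝ) : Prop :=
  p ∈ C ∧ ∀ q ∈ C,
    ‖z.1 - p.1‖ ^ 2 + (z.2.1 - p.2.1) ^ 2 + (z.2.2 - p.2.2) ^ 2 ≤
      ‖z.1 - q.1‖ ^ 2 + (z.2.1 - q.2.1) ^ 2 + (z.2.2 - q.2.2) ^ 2

/-- `p = prox_{γ g}(z)` on `E`. -/
def IsProxE {E : Type*} [NormedAddCommGroup E] (g : E → EReal) (γ : ℝ) (z p : E) : Prop :=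
  ∀ y, g p + ((‖z - p‖ ^ 2 / (2 * γ) : ℝ) : EReal) ≤ g y + ((‖z - y‖ ^ 2 / (2 * γ) : ℝ) : EReal)

/-- `p = prox_{γ g}(z)` on `E ⊕ ℝ` (Hilbert direct sum distance). -/
def IsProx2 {E : Type*} [NormedAddCommGroup E] (g : E × ℝ → EReal) (γ : ℝ)
    (z p : E × ℝ) : Prop :=
  ∀ y, g p + (((‖z.1 - p.1‖ ^ 2 + (z.2 - p.2) ^ 2) / (2 * γ) : ℝ) : EReal) ≤
    g y + (((‖z.1 - y.1‖ ^ 2 + (z.2 - y.2) ^ 2) / (2 * γ) : ℝ) : EReal)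

/-- subdifferential of `f` at `x`. -/
def subdiff {E : Type*} [NormedAddCommGroup E] [InnerProductSpace ℝ E]
    (f : E → EReal) (x : E) : Set E :=
  {u | ∀ y, ((inner ℝ (y - x) u : ℝ) : EReal) + f x ≤ f y}

theorem stmt0 {H : Type*} [NormedAddCommGroup H] [InnerProductSpace ℝ H] [CompleteSpace H]
    (f : H → EReal) (hf : Gamma0 f) (x : H) (fx : ℝ) (hfx : f x = (fx : EReal))
    (u : H) (hu : u ∈ subdiff f x) (t : ℝ) (ht : 0 < t) :
    (x + t • u, fx - t) ∉ epi f ∧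
      IsProj2 (epi f) (x + t • u, fx - t) (x, fx) := by
  have key : ∀ y : H, (((inner ℝ (y - x) u : ℝ) + fx : ℝ) : EReal) ≤ f y := by
    intro y
    have h := hu y
    rw [hfx] at h
    rwa [EReal.coe_add]
  constructor
  · intro hmem
    have h2 : f (x + t • u) ≤ ((fx - t : ℝ) : EReal) := hmem
    have h3 := le_trans (key (x + t • u)) h2
    rw [EReal.coe_le_coe_iff] at h3
    have e : (inner ℝ (x + t • u - x) u : ℝ) = t * ‖u‖ ^ 2 := by
      have : x + t • u - x = t • u := by abel
      rw [this, real_inner_smul_left, real_inner_self_eq_norm_sq]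
    rw [e] at h3
    nlinarith [sq_nonneg ‖u‖]
  · refine ⟨by simpa [epi, hfx] using le_refl (fx : EReal), ?_⟩
    rintro ⟨y, s⟩ hq
    have h2 : f y ≤ (s : EReal) := hq
    have h3 : (inner ℝ (y - x) u : ℝ) + fx ≤ s := by
      exact_mod_cast le_trans (key y) h2
    have e1 : x + t • u - x = t • u := by abel
    have e2 : x + t • u - y = t • u - (y - x) := by abel
    have e3 : ‖t • u - (y - x)‖ ^ 2 =
        ‖t • u‖ ^ 2 - 2 * (inner ℝ (t • u) (y - x) : ℝ) + ‖y - x‖ ^ 2 :=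
      @norm_sub_sq_real H _ _ _ _
    have e4 : (inner ℝ (t • u) (y - x) : ℝ) = t * (inner ℝ (y - x) u : ℝ) := by
      rw [real_inner_smul_left, real_inner_comm]
    have e5 : ‖t • u‖ ^ 2 = t ^ 2 * ‖u‖ ^ 2 := by
      rw [norm_smul]; simp [mul_pow, sq_abs]
    simp only [e1, e2, e3, e4, e5]
    have hn : (0:ℝ) ≤ ‖y - x‖ ^ 2 := sq_nonneg _
    nlinarith [sq_nonneg (s - fx),
      mul_nonneg ht.le (by linarith : (0:ℝ) ≤ s - fx - (inner ℝ (y - x) u : ℝ))]
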